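/- Let L ⊆ ℤⁿ be a sublattice and I_L = ⟨∂^{u₊} − ∂^{u₋} : u ∈ L⟩ the lattice ideal in ℂ[∂₁,…,∂ₙ]. If L is saturated in ℤⁿ (i.e., L = (ℚL) ∩ ℤⁿ), then I_L is a prime ideal. -/

import Mathlib

open MvPolynomial

namespace LatticePrimeAux

variable (n : ℕ) (L : Submodule ℤ (Fin n → ℤ))

/-- coercion ℤⁿ → ℚⁿ as an additive hom -/
def fmap : (Fin n → ℤ) →+ (Fin n → ℚ) where
  toFun v i := (v i : ℚ)
  map_zero' := by funext i; simp
  map_add' a b := by funext i; push_cast; simp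

lemma fmap_injective : Function.Injective (fmap n) := by
  intro a b h
  funext i
  have := congrFun h i
  simp only [fmap, AddMonoidHom.coe_mk, ZeroHom.coe_mk] at this
  exact_mod_cast this

/-- the ℚ-span of the image of L -/
def LQ : Submodule ℚ (Fin n → ℚ) := Submodule.span ℚ (fmap n '' (L : Set (Fin n → ℤ)))

lemma clear_denom : ∀ x ∈ LQ n L, ∃ k : ℤ, k ≠ 0 ∧ ∃ w ∈ L, k • x = fmap n w := by
  intro x hx
  refine Submodule.span_induction ?_ ?_ ?_ ?_ hx
  · rintro y ⟨w, hw, rfl⟩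
    exact ⟨1, one_ne_zero, w, hw, one_smul _ _⟩
  · exact ⟨1, one_ne_zero, 0, Submodule.zero_mem L, by simp⟩
  · rintro x y _ _ ⟨k₁, hk₁, w₁, hw₁, h₁⟩ ⟨k₂, hk₂, w₂, hw₂, h₂⟩
    refine ⟨k₁ * k₂, mul_ne_zero hk₁ hk₂, k₂ • w₁ + k₁ • w₂,
      L.add_mem (L.smul_mem _ hw₁) (L.smul_mem _ hw₂), ?_⟩
    rw [map_add, map_zsmul, map_zsmul, ← h₁, ← h₂, smul_add, mul_smul, mul_smul k₁ k₂ y]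
    rw [smul_comm k₁ k₂ x]
  · rintro q x _ ⟨k, hk, w, hw, h⟩
    refine ⟨q.den * k, mul_ne_zero (by exact_mod_cast q.den_ne_zero) hk, q.num • w,
      L.smul_mem _ hw, ?_⟩
    rw [map_zsmul, ← h]
    simp only [← Int.cast_smul_eq_zsmul ℚ, smul_smul]
    congr 1
    push_cast
    rw [mul_assoc, mul_comm (k : ℚ) q, ← mul_assoc, Rat.den_mul_eq_num, mul_comm]

/-- the quotient vector space -/
abbrev V : Type := (Fin n → ℚ) ⧸ LQ n L

/-- ℤⁿ → V -/
def g : (Fin n → ℤ) →+ V n L := ((LQ n L).mkQ.toAddMonoidHom).comp (fmap n)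

variable {n L}

lemma g_eq_zero_iff (hsat : ∀ (k : ℤ), k ≠ 0 → ∀ v : Fin n → ℤ, k • v ∈ L → v ∈ L)
    (v : Fin n → ℤ) : g n L v = 0 ↔ v ∈ L := by
  constructor
  · intro h
    have hx : fmap n v ∈ LQ n L := by
      simpa [g, Submodule.Quotient.mk_eq_zero] using h
    obtain ⟨k, hk, w, hw, hkw⟩ := clear_denom n L _ hx
    rw [← map_zsmul] at hkw
    have := fmap_injective n hkw
    exact hsat k hk v (this ▸ hw)
  · intro h
    have : fmap n v ∈ LQ n L := Submodule.subset_span ⟨v, h, rfl⟩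
    simpa [g, Submodule.Quotient.mk_eq_zero] using this

lemma g_eq_iff (hsat : ∀ (k : ℤ), k ≠ 0 → ∀ v : Fin n → ℤ, k • v ∈ L → v ∈ L)
    (a b : Fin n → ℤ) : g n L a = g n L b ↔ a - b ∈ L := by
  rw [← g_eq_zero_iff hsat, map_sub, sub_eq_zero]

variable (n L)

/-- cast ℕⁿ exponent to ℤⁿ -/
def iv (a : Fin n → ℕ) : Fin n → ℤ := fun i => (a i : ℤ)

noncomputable def φ : MvPolynomial (Fin n) ℂ →+* AddMonoidAlgebra ℂ (V n L) :=
  (MvPolynomial.aeval (fun i : Fin n =>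
    AddMonoidAlgebra.single (g n L (Pi.single i 1)) (1 : ℂ))).toRingHom

lemma φ_prod (a : Fin n → ℕ) :
    φ n L (∏ i, X i ^ a i) = AddMonoidAlgebra.single (g n L (iv n a)) 1 := by
  rw [map_prod]
  simp only [map_pow, φ, AlgHom.toRingHom_eq_coe, RingHom.coe_coe, aeval_X,
    AddMonoidAlgebra.single_pow, one_pow]
  rw [AddMonoidAlgebra.prod_single, Finset.prod_const_one]
  congr 1
  have h2 : ∑ i : Fin n, a i • (g n L) (Pi.single i 1)
      = g n L (∑ i : Fin n, a i • Pi.single i (1 : ℤ)) := by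
    rw [map_sum]
    simp only [map_nsmul]
  rw [h2]
  congr 1
  funext j
  simp [Finset.sum_apply, Pi.single_apply, iv]

lemma φ_monomial (a : Fin n →₀ ℕ) (c : ℂ) :
    φ n L (monomial a c) = AddMonoidAlgebra.single (g n L (iv n a)) c := by
  have h0 : (∏ i : Fin n, (X i : MvPolynomial (Fin n) ℂ) ^ a i) = monomial a 1 := by
    rw [← prod_X_pow_eq_monomial]
    exact (Finset.prod_subset (Finset.subset_univ a.support)
      (fun x _ hx => by simp [Finsupp.notMem_support_iff.mp hx])).symm
  have h1 : (monomial a c : MvPolynomial (Fin n) ℂ) = C c * ∏ i, X i ^ a i := by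
    rw [h0, C_mul_monomial, mul_one]
  rw [h1, map_mul, φ_prod]
  have h2 : φ n L (C c) = AddMonoidAlgebra.single 0 c := by
    simp [φ, AddMonoidAlgebra.coe_algebraMap]
  rw [h2, AddMonoidAlgebra.single_mul_single, zero_add, mul_one]

open scoped Classical

/-- generating set of the lattice ideal -/
def S : Set (MvPolynomial (Fin n) ℂ) :=
  {p : MvPolynomial (Fin n) ℂ | ∃ u ∈ L,
    p = (∏ i, X i ^ (u i).toNat) - ∏ i, X i ^ (-(u i)).toNat}

lemma prod_univ_eq_monomial (a : Fin n →₀ ℕ) :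
    (∏ i : Fin n, (X i : MvPolynomial (Fin n) ℂ) ^ a i) = monomial a 1 := by
  rw [← prod_X_pow_eq_monomial]
  exact (Finset.prod_subset (Finset.subset_univ a.support)
    (fun x _ hx => by simp [Finsupp.notMem_support_iff.mp hx])).symm

lemma binomial_mem (a b : Fin n → ℕ) (h : (fun i => (a i : ℤ) - b i) ∈ L) :
    (∏ i, (X i : MvPolynomial (Fin n) ℂ) ^ a i) - (∏ i, X i ^ b i)
      ∈ Ideal.span (S n L) := by
  set u : Fin n → ℤ := fun i => (a i : ℤ) - b i with hu
  set c : Fin n → ℕ := fun i => min (a i) (b i) with hc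
  have ha : ∀ i, a i = c i + (u i).toNat := by intro i; simp only [hc, hu]; omega
  have hb : ∀ i, b i = c i + (-(u i)).toNat := by intro i; simp only [hc, hu]; omega
  have h1 : (∏ i, (X i : MvPolynomial (Fin n) ℂ) ^ a i)
      = (∏ i, X i ^ c i) * ∏ i, X i ^ (u i).toNat := by
    rw [← Finset.prod_mul_distrib]
    exact Finset.prod_congr rfl fun i _ => by rw [← pow_add, ← ha i]
  have h2 : (∏ i, (X i : MvPolynomial (Fin n) ℂ) ^ b i)
      = (∏ i, X i ^ c i) * ∏ i, X i ^ (-(u i)).toNat := by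
    rw [← Finset.prod_mul_distrib]
    exact Finset.prod_congr rfl fun i _ => by rw [← pow_add, ← hb i]
  rw [h1, h2, ← mul_sub]
  exact Ideal.mul_mem_left _ _ (Ideal.subset_span ⟨u, h, rfl⟩)

lemma span_le_ker (hsat : ∀ (k : ℤ), k ≠ 0 → ∀ v : Fin n → ℤ, k • v ∈ L → v ∈ L) :
    Ideal.span (S n L) ≤ RingHom.ker (φ n L) := by
  rw [Ideal.span_le]
  rintro p ⟨u, hu, rfl⟩
  have e1 := φ_prod n L (fun i => (u i).toNat)
  have e2 := φ_prod n L (fun i => (-(u i)).toNat)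
  simp only [SetLike.mem_coe, RingHom.mem_ker, map_sub, e1, e2, sub_eq_zero]
  congr 1
  have hd : iv n (fun i => (u i).toNat) - iv n (fun i => (-(u i)).toNat) = u := by
    funext i; simp only [iv, Pi.sub_apply]; omega
  rw [g_eq_iff hsat, hd]
  exact hu

lemma φ_eq (p : MvPolynomial (Fin n) ℂ) :
    φ n L p = ∑ a ∈ p.support, AddMonoidAlgebra.single (g n L (iv n a)) (coeff a p) := by
  conv_lhs => rw [p.as_sum]
  rw [map_sum]
  exact Finset.sum_congr rfl fun a _ => φ_monomial n L a (coeff a p)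

lemma class_sum (p : MvPolynomial (Fin n) ℂ) (hp : φ n L p = 0) (q : V n L) :
    ∑ a ∈ p.support, (if g n L (iv n a) = q then coeff a p else 0) = 0 := by
  have h : ((∑ a ∈ p.support,
      AddMonoidAlgebra.single (g n L (iv n a)) (coeff a p)) : AddMonoidAlgebra ℂ (V n L)).coeff q
      = 0 := by
    rw [← φ_eq, hp]; rfl
  rw [AddMonoidAlgebra.coeff_sum, Finsupp.finset_sum_apply] at h
  calc ∑ a ∈ p.support, (if g n L (iv n a) = q then coeff a p else 0)
      = ∑ a ∈ p.support, (AddMonoidAlgebra.single (g n L (iv n a)) (coeff a p)).coeff q :=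
        Finset.sum_congr rfl fun a _ => (Finsupp.single_apply).symm
    _ = 0 := h

lemma ker_le_span (hsat : ∀ (k : ℤ), k ≠ 0 → ∀ v : Fin n → ℤ, k • v ∈ L → v ∈ L) :
    ∀ m : ℕ, ∀ p : MvPolynomial (Fin n) ℂ, p.support.card ≤ m →
    φ n L p = 0 → p ∈ Ideal.span (S n L) := by
  intro m
  induction m with
  | zero =>
    intro p hp _
    have : p = 0 := by
      rwa [Nat.le_zero, Finset.card_eq_zero, MvPolynomial.support_eq_empty] at hp
    simp [this]
  | succ m ih =>
    intro p hcard hker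
    by_cases h0 : p = 0
    · simp [h0]
    obtain ⟨a₀, ha₀⟩ := (MvPolynomial.support_nonempty.mpr h0)
    have hc0 : coeff a₀ p ≠ 0 := MvPolynomial.mem_support_iff.mp ha₀
    have hsum := class_sum n L p hker (g n L (iv n a₀))
    have hex : ∃ a₁ ∈ p.support, a₁ ≠ a₀ ∧ g n L (iv n a₁) = g n L (iv n a₀) := by
      by_contra hnone
      push_neg at hnone
      have : ∑ a ∈ p.support,
          (if g n L (iv n a) = g n L (iv n a₀) then coeff a p else 0) = coeff a₀ p := by
        rw [Finset.sum_eq_single a₀]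
        · rw [if_pos rfl]
        · intro b hb hba
          rw [if_neg (hnone b hb hba)]
        · intro h; exact absurd ha₀ h
      exact hc0 (this ▸ hsum)
    obtain ⟨a₁, ha₁, hne, hga⟩ := hex
    set c := coeff a₀ p with hcdef
    set b : MvPolynomial (Fin n) ℂ := monomial a₀ c - monomial a₁ c with hbdef
    have hbmem : b ∈ Ideal.span (S n L) := by
      have hL : (fun i => ((a₀ i : ℤ)) - (a₁ i : ℤ)) ∈ L := by
        have hd : iv n a₀ - iv n a₁ = fun i => ((a₀ i : ℤ)) - (a₁ i : ℤ) := by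
          funext i; simp [iv]
        exact hd ▸ (g_eq_iff hsat _ _).mp hga.symm
      have hbin := binomial_mem n L a₀ a₁ hL
      have : b = C c * ((∏ i, (X i : MvPolynomial (Fin n) ℂ) ^ a₀ i) - ∏ i, X i ^ a₁ i) := by
        rw [prod_univ_eq_monomial, prod_univ_eq_monomial, mul_sub,
          C_mul_monomial, C_mul_monomial, mul_one]
      rw [this]
      exact Ideal.mul_mem_left _ _ hbin
    have hφb : φ n L b = 0 := by
      rw [hbdef, map_sub, φ_monomial, φ_monomial, hga, sub_self]
    have hsub : (p - b).support ⊆ p.support.erase a₀ := by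
      intro a ha
      have hcoeff : coeff a (p - b) ≠ 0 := MvPolynomial.mem_support_iff.mp ha
      rw [Finset.mem_erase]
      constructor
      · intro haa
        apply hcoeff
        rw [haa, coeff_sub, hbdef, coeff_sub, coeff_monomial, if_pos rfl,
          coeff_monomial, if_neg hne, hcdef]
        ring
      · by_contra hnotin
        apply hcoeff
        have h1 : coeff a p = 0 := MvPolynomial.notMem_support_iff.mp hnotin
        have h2 : a ≠ a₀ := fun h => hnotin (h ▸ ha₀)
        have h3 : a ≠ a₁ := fun h => hnotin (h ▸ ha₁)
        rw [coeff_sub, hbdef, coeff_sub, coeff_monomial, if_neg (fun h => h2 h.symm),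
          coeff_monomial, if_neg (fun h => h3 h.symm), h1]
        ring
    have hcard' : (p - b).support.card ≤ m := by
      calc (p - b).support.card ≤ (p.support.erase a₀).card := Finset.card_le_card hsub
        _ ≤ p.support.card - 1 := le_of_eq (Finset.card_erase_of_mem ha₀)
        _ ≤ m := by omega
    have hpb : p - b ∈ Ideal.span (S n L) :=
      ih (p - b) hcard' (by rw [map_sub, hker, hφb, sub_self])
    have : p = (p - b) + b := by ring
    rw [this]
    exact Ideal.add_mem _ hpb hbmem

end LatticePrimeAux

/-- If `L ⊆ ℤⁿ` is a saturated sublattice, then the lattice ideal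
`I_L = ⟨∂^{u₊} − ∂^{u₋} : u ∈ L⟩ ⊆ ℂ[∂₁,…,∂ₙ]` is prime. -/
theorem lattice_ideal_of_saturated_is_prime
    (n : ℕ) (L : Submodule ℤ (Fin n → ℤ))
    (hsat : ∀ (k : ℤ), k ≠ 0 → ∀ v : Fin n → ℤ, k • v ∈ L → v ∈ L) :
    (Ideal.span {p : MvPolynomial (Fin n) ℂ | ∃ u ∈ L,
        p = (∏ i, X i ^ (u i).toNat) - ∏ i, X i ^ (-(u i)).toNat}).IsPrime := by
  have heq : Ideal.span (LatticePrimeAux.S n L) = RingHom.ker (LatticePrimeAux.φ n L) :=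
    le_antisymm (LatticePrimeAux.span_le_ker n L hsat)
      (fun p hp => LatticePrimeAux.ker_le_span n L hsat p.support.card p le_rfl hp)
  show (Ideal.span (LatticePrimeAux.S n L)).IsPrime
  rw [heq]
  haveI : IsDomain (AddMonoidAlgebra ℂ (LatticePrimeAux.V n L)) :=
    NoZeroDivisors.to_isDomain _
  exact RingHom.ker_isPrime _
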